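/- Let H be a real Hilbert space, r > 0, and x̄ ∈ H with ‖x̄‖ > r. Then for every y ∈ H, D̂*P_{rB}(x̄)(y) = { (r/‖x̄‖)(y − (⟨x̄, y⟩/‖x̄‖²) x̄) }. -/

import Mathlib

open RealInnerProductSpace Filter Metric

/-- `P` is the metric projection (nearest-point map) onto `C`. -/
def IsMetricProj {H : Type*} [NormedAddCommGroup H] [InnerProductSpace ℝ H]
    (C : Set H) (P : H → H) : Prop :=
  ∀ x : H, P x ∈ C ∧ ∀ w ∈ C, ‖x - P x‖ ≤ ‖x - w‖

/-- The set `D̂*f(xb)(y)` characterized by the limsup inequality. -/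
def coderivSet {H : Type*} [NormedAddCommGroup H] [InnerProductSpace ℝ H]
    (f : H → H) (xb y : H) : Set H :=
  {z | ∀ ε > (0:ℝ), ∃ δ > (0:ℝ), ∀ u : H, u ≠ xb → ‖u - xb‖ < δ →
    (⟪z, u - xb⟫ - ⟪y, f u - f xb⟫) / ‖u - xb‖ < ε}

/-- The (Fréchet) regular normal cone via the limsup inequality. -/
def regNormalCone {E : Type*} [NormedAddCommGroup E] [InnerProductSpace ℝ E]
    (Ω : Set E) (w : E) : Set E :=
  {v | ∀ ε > (0:ℝ), ∃ δ > (0:ℝ), ∀ u ∈ Ω, u ≠ w → ‖u - w‖ < δ →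
    ⟪v, u - w⟫ / ‖u - w‖ < ε}

/-- The Bouligand (contingent) tangent cone. -/
def bouligandTangentCone {E : Type*} [NormedAddCommGroup E] [NormedSpace ℝ E]
    (Ω : Set E) (w : E) : Set E :=
  {z | ∃ t : ℕ → ℝ, ∃ s : ℕ → E, (∀ n, 0 < t n) ∧
    Tendsto t atTop (nhds 0) ∧ Tendsto s atTop (nhds z) ∧ ∀ n, w + t n • s n ∈ Ω}

variable {H : Type*} [NormedAddCommGroup H] [InnerProductSpace ℝ H] [CompleteSpace H]

omit [CompleteSpace H] in
lemma proj_formula (r : ℝ) (hr : 0 < r) (P : H → H)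
    (hP : IsMetricProj (closedBall (0:H) r) P) {u : H} (hu : r < ‖u‖) :
    P u = (r / ‖u‖) • u := by
  obtain ⟨hmem, hmin⟩ := hP u
  have hu0 : (0:ℝ) < ‖u‖ := hr.trans hu
  have hwnorm : ‖(r / ‖u‖) • u‖ = r := by
    rw [norm_smul, Real.norm_eq_abs, abs_of_nonneg (by positivity),
      div_mul_cancel₀ _ hu0.ne']
  have hw : (r / ‖u‖) • u ∈ closedBall (0:H) r :=
    mem_closedBall_zero_iff.2 (le_of_eq hwnorm)
  have hdiff : ‖u - (r / ‖u‖) • u‖ = ‖u‖ - r := by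
    have h : u - (r / ‖u‖) • u = (1 - r / ‖u‖) • u := by
      rw [sub_smul, one_smul]
    rw [h, norm_smul, Real.norm_eq_abs, abs_of_nonneg, sub_mul, one_mul,
      div_mul_cancel₀ _ hu0.ne']
    have : r / ‖u‖ < 1 := (div_lt_one hu0).2 hu
    linarith
  have h1 : ‖u - P u‖ ≤ ‖u‖ - r := by
    calc ‖u - P u‖ ≤ ‖u - (r / ‖u‖) • u‖ := hmin _ hw
    _ = ‖u‖ - r := hdiff
  have hPle : ‖P u‖ ≤ r := mem_closedBall_zero_iff.1 hmem
  have h2 : ‖u‖ - ‖P u‖ ≤ ‖u - P u‖ := norm_sub_norm_le u (P u)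
  have hPn : ‖P u‖ = r := le_antisymm hPle (by linarith)
  have heq : ‖u - P u‖ = ‖u‖ - r := le_antisymm h1 (by linarith)
  have hsq : ‖u - P u‖ ^ 2 = ‖u‖ ^ 2 - 2 * ⟪u, P u⟫ + ‖P u‖ ^ 2 := norm_sub_sq_real u (P u)
  have hinner : ⟪u, P u⟫ = ‖u‖ * ‖P u‖ := by
    rw [heq, hPn] at hsq
    rw [hPn]
    nlinarith [hsq]
  have hkey : ‖P u‖ • u = ‖u‖ • P u := inner_eq_norm_mul_iff_real.1 hinner
  rw [hPn] at hkey
  have h3 := congrArg (fun w => (‖u‖)⁻¹ • w) hkey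
  simp only [smul_smul] at h3
  rw [inv_mul_cancel₀ hu0.ne', one_smul] at h3
  rw [← h3, mul_comm, ← div_eq_mul_inv]


set_option maxHeartbeats 1000000 in
theorem stmt5 (r : ℝ) (hr : 0 < r) (xb : H) (hx : r < ‖xb‖) (P : H → H)
    (hP : IsMetricProj (closedBall (0:H) r) P) (y : H) :
    coderivSet P xb y = {(r / ‖xb‖) • (y - (⟪xb, y⟫ / ‖xb‖ ^ 2) • xb)} := by
  have hc : (0:ℝ) < ‖xb‖ := hr.trans hx
  set c := ‖xb‖ with hcdef
  set A : H →L[ℝ] H :=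
    (r / c) • (ContinuousLinearMap.id ℝ H - (c ^ 2)⁻¹ • ((innerSL ℝ xb).smulRight xb)) with hA
  have hAapp : ∀ h : H, A h = (r / c) • (h - (⟪xb, h⟫ / c ^ 2) • xb) := by
    intro h
    simp [hA, smul_smul, div_eq_inv_mul]
  -- differentiability
  have hqsq : HasFDerivAt (fun u : H => ‖u‖ ^ 2) ((2:ℝ) • innerSL ℝ xb) xb := by
    have := (hasStrictFDerivAt_norm_sq xb).hasFDerivAt
    convert this using 1
    ext h
    simp [two_smul]
  have hsqrt : HasDerivAt Real.sqrt (1 / (2 * c)) (c ^ 2) := by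
    have h := Real.hasDerivAt_sqrt (x := c ^ 2) (by positivity)
    rwa [Real.sqrt_sq hc.le] at h
  have hnorm : HasFDerivAt (fun u : H => ‖u‖) (c⁻¹ • innerSL ℝ xb) xb := by
    have h1 : HasFDerivAt (fun u : H => Real.sqrt (‖u‖ ^ 2))
        ((1 / (2 * c)) • ((2:ℝ) • innerSL ℝ xb)) xb := by
      have := hsqrt.comp_hasFDerivAt xb hqsq
      convert this using 2
      all_goals rfl
    have h2 : (fun u : H => Real.sqrt (‖u‖ ^ 2)) = fun u => ‖u‖ := by
      funext u; exact Real.sqrt_sq (norm_nonneg u)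
    rw [h2] at h1
    convert h1 using 1
    ext h
    simp [smul_smul]
  have hinv : HasFDerivAt (fun u : H => ‖u‖⁻¹)
      ((-(c ^ 2)⁻¹) • (c⁻¹ • innerSL ℝ xb)) xb := by
    have := (hasDerivAt_inv hc.ne').comp_hasFDerivAt xb hnorm
    convert this using 2
    all_goals rfl
  have hgs : HasFDerivAt (fun u : H => ‖u‖⁻¹ • u)
      (c⁻¹ • ContinuousLinearMap.id ℝ H
        + ((-(c ^ 2)⁻¹) • (c⁻¹ • innerSL ℝ xb)).smulRight xb) xb := by
    have := hinv.smul (hasFDerivAt_id xb)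
    convert this using 2
    all_goals rfl
  have hgA : HasFDerivAt (fun u : H => r • ‖u‖⁻¹ • u) A xb := by
    have := hgs.const_smul r
    convert this using 1
    · rfl
    ext h
    simp [hAapp, smul_sub, smul_smul, div_eq_mul_inv, sub_eq_add_neg]
    module
  have hev : P =ᶠ[nhds xb] fun u : H => r • ‖u‖⁻¹ • u := by
    have hopen : IsOpen {u : H | r < ‖u‖} := isOpen_lt continuous_const continuous_norm
    filter_upwards [hopen.mem_nhds hx] with u hu
    rw [proj_formula r hr P hP hu, div_eq_mul_inv, mul_smul]
  have hPder : HasFDerivAt P A xb := hgA.congr_of_eventuallyEq hev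
  have hlo : (fun u => P u - P xb - A (u - xb)) =o[nhds xb] fun u => u - xb :=
    hPder.isLittleO
  -- self-adjointness
  have hadj : ∀ z h : H, ⟪A z, h⟫ = ⟪z, A h⟫ := by
    intro z h
    simp only [hAapp, real_inner_smul_left, real_inner_smul_right, inner_sub_left,
      inner_sub_right]
    rw [real_inner_comm z xb]
    ring
  have hAy : A y = (r / c) • (y - (⟪xb, y⟫ / c ^ 2) • xb) := hAapp y
  rw [← hAy]
  ext z
  simp only [Set.mem_singleton_iff]
  constructor
  · -- coderivSet ⊆ {A y}
    intro hz
    have key : ∀ v : H, ⟪z - A y, v⟫ ≤ 0 := by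
      intro v
      by_contra hcon
      push_neg at hcon
      set m := ⟪z - A y, v⟫ with hm
      have hv0 : v ≠ 0 := by
        rintro rfl; simp [hm] at hcon
      have hvn : (0:ℝ) < ‖v‖ := norm_pos_iff.2 hv0
      have hε : (0:ℝ) < m / (2 * ‖v‖) := by positivity
      obtain ⟨δ, hδ0, hδ⟩ := hz (m / (2 * ‖v‖)) hε
      have hε2 : (0:ℝ) < m / (4 * ‖v‖ * (‖y‖ + 1)) := by positivity
      have hev2 := hlo.def hε2
      rw [Metric.eventually_nhds_iff] at hev2
      obtain ⟨δ₂, hδ₂0, hδ₂⟩ := hev2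
      set t := min δ δ₂ / (2 * ‖v‖) with ht
      have ht0 : 0 < t := by positivity
      set u := xb + t • v with hu
      have husub : u - xb = t • v := by simp [hu]
      have hune : u ≠ xb := by
        intro h
        have : t • v = 0 := by rw [← husub, h, sub_self]
        rcases smul_eq_zero.1 this with h' | h'
        · exact ht0.ne' h'
        · exact hv0 h'
      have hnormu : ‖u - xb‖ = t * ‖v‖ := by
        rw [husub, norm_smul, Real.norm_eq_abs, abs_of_pos ht0]
      have htv : t * ‖v‖ < min δ δ₂ := by
        rw [ht]
        rw [div_mul_eq_mul_div, mul_comm]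
        rw [div_lt_iff₀ (by positivity)]
        have : 0 < min δ δ₂ := lt_min hδ0 hδ₂0
        nlinarith
      have hlt1 : ‖u - xb‖ < δ := by rw [hnormu]; exact htv.trans_le (min_le_left _ _)
      have hlt2 : dist u xb < δ₂ := by
        rw [dist_eq_norm, hnormu]; exact htv.trans_le (min_le_right _ _)
      have hEb := hδ₂ hlt2
      rw [husub] at hEb
      have hquot := hδ u hune hlt1
      set E := P u - P xb - A (t • v) with hE
      have hnum : ⟪z, u - xb⟫ - ⟪y, P u - P xb⟫ = t * m - ⟪y, E⟫ := by
        have hPd : P u - P xb = A (t • v) + E := by rw [hE]; abel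
        rw [husub, hPd, inner_add_right, real_inner_smul_right]
        have h1 : ⟪y, A (t • v)⟫ = t * ⟪A y, v⟫ := by
          rw [← hadj, real_inner_smul_right]
        rw [h1, hm, inner_sub_left]
        ring
      have hEbound : ⟪y, E⟫ ≤ ‖y‖ * (m / (4 * ‖v‖ * (‖y‖ + 1)) * (t * ‖v‖)) := by
        calc ⟪y, E⟫ ≤ ‖y‖ * ‖E‖ := real_inner_le_norm y E
        _ ≤ ‖y‖ * (m / (4 * ‖v‖ * (‖y‖ + 1)) * ‖t • v‖) := by
            apply mul_le_mul_of_nonneg_left _ (norm_nonneg y)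
            exact hEb
        _ = ‖y‖ * (m / (4 * ‖v‖ * (‖y‖ + 1)) * (t * ‖v‖)) := by
            rw [norm_smul, Real.norm_eq_abs, abs_of_pos ht0]
      have hge : m / (2 * ‖v‖) ≤ (⟪z, u - xb⟫ - ⟪y, P u - P xb⟫) / ‖u - xb‖ := by
        rw [hnormu, le_div_iff₀ (by positivity), hnum]
        have hy0 : ‖y‖ + 1 ≠ 0 := by positivity
        have hy1 : ‖y‖ / (‖y‖ + 1) ≤ 1 := by
          rw [div_le_one (by positivity)]; linarith [norm_nonneg y]
        have hb : ‖y‖ * (m / (4 * ‖v‖ * (‖y‖ + 1)) * (t * ‖v‖)) =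
            (‖y‖ / (‖y‖ + 1)) * (m * t / 4) := by
          field_simp
        have hb2 : (‖y‖ / (‖y‖ + 1)) * (m * t / 4) ≤ m * t / 4 := by
          nlinarith [mul_pos hcon ht0, div_nonneg (norm_nonneg y) (by positivity : (0:ℝ) ≤ ‖y‖ + 1)]
        have hL : m / (2 * ‖v‖) * (t * ‖v‖) = m * t / 2 := by
          field_simp
        rw [hL]
        have hmt : 0 < m * t := mul_pos hcon ht0
        have hyE : ⟪y, E⟫ ≤ m * t / 4 := by
          rw [hb] at hEbound
          linarith
        linarith
      linarith
    have key0 : ∀ v : H, ⟪z - A y, v⟫ = 0 := by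
      intro v
      have h1 := key v
      have h2 := key (-v)
      rw [inner_neg_right] at h2
      linarith
    have : z - A y = 0 := by
      have := key0 (z - A y)
      rwa [real_inner_self_eq_norm_sq, pow_eq_zero_iff (by norm_num), norm_eq_zero] at this
    have := sub_eq_zero.1 this
    exact this
  · -- {A y} ⊆ coderivSet
    rintro rfl
    intro ε hε
    have hε' : (0:ℝ) < ε / (2 * (‖y‖ + 1)) := by positivity
    have hev2 := hlo.def hε'
    rw [Metric.eventually_nhds_iff] at hev2
    obtain ⟨δ, hδ0, hδ⟩ := hev2
    refine ⟨δ, hδ0, fun u hune hun => ?_⟩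
    have hun0 : (0:ℝ) < ‖u - xb‖ := norm_pos_iff.2 (sub_ne_zero.2 hune)
    have hEb := hδ (show dist u xb < δ by rwa [dist_eq_norm])
    set E := P u - P xb - A (u - xb) with hE
    have hnum : ⟪A y, u - xb⟫ - ⟪y, P u - P xb⟫ = -⟪y, E⟫ := by
      have hPd : P u - P xb = A (u - xb) + E := by rw [hE]; abel
      rw [hPd, inner_add_right, ← hadj]
      ring
    rw [hnum, div_lt_iff₀ hun0]
    have h1 : -⟪y, E⟫ ≤ ‖y‖ * ‖E‖ := by
      have := real_inner_le_norm y (-E)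
      rwa [inner_neg_right, norm_neg] at this
    have h2 : ‖y‖ * ‖E‖ ≤ ‖y‖ * (ε / (2 * (‖y‖ + 1)) * ‖u - xb‖) :=
      mul_le_mul_of_nonneg_left hEb (norm_nonneg y)
    have h3 : ‖y‖ * (ε / (2 * (‖y‖ + 1)) * ‖u - xb‖) < ε * ‖u - xb‖ := by
      have hy1 : ‖y‖ / (‖y‖ + 1) ≤ 1 := by
        rw [div_le_one (by positivity)]; linarith [norm_nonneg y]
      have : ‖y‖ * (ε / (2 * (‖y‖ + 1)) * ‖u - xb‖) =
          (‖y‖ / (‖y‖ + 1)) * (ε / 2) * ‖u - xb‖ := by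
        field_simp
      rw [this]
      have h4 : (‖y‖ / (‖y‖ + 1)) * (ε / 2) ≤ ε / 2 := by
        nlinarith [div_nonneg (norm_nonneg y) (by positivity : (0:ℝ) ≤ ‖y‖ + 1)]
      nlinarith
    linarith
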